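/- Let Q be a rack, Y a Q-set, and fix e₁,…,e_m ∈ {−1,1}, i₁,…,i_m ∈ {1,…,n}. Equip Q^n with the rack operation (a₁,…,a_n)*(b₁,…,b_n) = (a₁ *^{e₁} b_{i₁} ⋯ *^{e_m} b_{i_m}, …, a_n *^{e₁} b_{i₁} ⋯ *^{e_m} b_{i_m}). Then Y is a Q^n-set via υ ⋆ (b₁,…,b_n) = υ ⋆^{e₁} b_{i₁} ⋆^{e₂} ⋯ ⋆^{e_m} b_{i_m}: each such translation of Y is bijective, and (υ⋆x)⋆y = (υ⋆y)⋆(x*y) for all υ ∈ Y and x,y ∈ Q^n. -/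

import Mathlib

/-- A rack. -/
structure RackS (Q : Type*) where
  op : Q → Q → Q
  bij : ∀ b : Q, Function.Bijective (fun a => op a b)
  dist : ∀ a b c : Q, op (op a b) c = op (op a c) (op b c)

/-- A `Q`-set. -/
structure QSet {Q : Type*} (R : RackS Q) (Y : Type*) where
  act : Y → Q → Y
  bij : ∀ a : Q, Function.Bijective (fun υ => act υ a)
  compat : ∀ (υ : Y) (a b : Q), act (act υ a) b = act (act υ b) (R.op a b)

/-- The right translation `S_b` as a permutation of `Q`. -/
noncomputable def RackS.S {Q : Type*} (R : RackS Q) (b : Q) : Equiv.Perm Q :=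
  Equiv.ofBijective _ (R.bij b)

/-- The translation `T_a` as a permutation of `Y`. -/
noncomputable def QSet.T {Q Y : Type*} {R : RackS Q} (S : QSet R Y) (a : Q) :
    Equiv.Perm Y :=
  Equiv.ofBijective _ (S.bij a)

/-- `a *^{e₁} b_{i₁} *^{e₂} ⋯ *^{e_m} b_{i_m}`, evaluated left to right. -/
noncomputable def par {Q : Type*} (R : RackS Q) {n m : ℕ}
    (e : Fin m → ℤ) (idx : Fin m → Fin n) (b : Fin n → Q) (x : Q) : Q :=
  (List.finRange m).foldl (fun x j => ((R.S (b (idx j))) ^ (e j)) x) x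

/-- `υ ⋆^{e₁} b_{i₁} ⋆^{e₂} ⋯ ⋆^{e_m} b_{i_m}`, evaluated left to right. -/
noncomputable def parY {Q Y : Type*} {R : RackS Q} (S : QSet R Y) {n m : ℕ}
    (e : Fin m → ℤ) (idx : Fin m → Fin n) (b : Fin n → Q) (υ : Y) : Y :=
  (List.finRange m).foldl (fun υ j => ((S.T (b (idx j))) ^ (e j)) υ) υ

section
variable {Q Y : Type*} {R : RackS Q} (S : QSet R Y)

lemma T_mul (a b : Q) : S.T b * S.T a = S.T (R.S b a) * S.T b := by
  ext υ
  simp only [Equiv.Perm.mul_apply]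
  exact S.compat υ a b

lemma T_inv_mul (a b : Q) :
    (S.T b)⁻¹ * S.T a = S.T ((R.S b)⁻¹ a) * (S.T b)⁻¹ := by
  have h := T_mul S ((R.S b)⁻¹ a) b
  rw [show (R.S b) ((R.S b)⁻¹ a) = a from Equiv.apply_symm_apply _ _] at h
  rw [inv_mul_eq_iff_eq_mul, ← mul_assoc, h]
  group

lemma T_zpow_mul (b : Q) : ∀ (g : ℤ) (a : Q),
    (S.T b) ^ g * S.T a = S.T (((R.S b) ^ g) a) * (S.T b) ^ g := by
  intro g
  induction g using Int.induction_on with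
  | zero => simp
  | succ k ih =>
    intro a
    rw [zpow_add_one, mul_assoc, T_mul, ← mul_assoc, ih, mul_assoc, zpow_add_one,
      Equiv.Perm.mul_apply]
  | pred k ih =>
    intro a
    rw [zpow_sub_one, mul_assoc, T_inv_mul, ← mul_assoc, ih, mul_assoc, zpow_sub_one,
      Equiv.Perm.mul_apply]

lemma T_zpow_mul_zpow (b : Q) (g f : ℤ) (a : Q) :
    (S.T b) ^ g * (S.T a) ^ f = (S.T (((R.S b) ^ g) a)) ^ f * (S.T b) ^ g := by
  have h : S.T (((R.S b) ^ g) a) = (S.T b) ^ g * S.T a * ((S.T b) ^ g)⁻¹ := by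
    rw [T_zpow_mul]
    group
  rw [h]
  rw [conj_zpow]
  group

lemma B_pt (b : Q) (g f : ℤ) (a : Q) (υ : Y) :
    ((S.T b) ^ g) (((S.T a) ^ f) υ)
      = ((S.T (((R.S b) ^ g) a)) ^ f) (((S.T b) ^ g) υ) := by
  have h := congrArg (fun p : Equiv.Perm Y => p υ) (T_zpow_mul_zpow S b g f a)
  simpa [Equiv.Perm.mul_apply] using h

lemma foldY_pull {n m : ℕ} (e : Fin m → ℤ) (idx : Fin m → Fin n) (y : Fin n → Q) :
    ∀ (l : List (Fin m)) (f : ℤ) (a : Q) (υ : Y),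
    l.foldl (fun υ j => ((S.T (y (idx j))) ^ (e j)) υ) (((S.T a) ^ f) υ)
      = ((S.T (l.foldl (fun x j => ((R.S (y (idx j))) ^ (e j)) x) a)) ^ f)
          (l.foldl (fun υ j => ((S.T (y (idx j))) ^ (e j)) υ) υ) := by
  intro l
  induction l with
  | nil => intro f a υ; rfl
  | cons j l ih =>
    intro f a υ
    simp only [List.foldl_cons]
    rw [B_pt S (y (idx j)) (e j) f a υ, ih]

end

section
variable {Q Y : Type*} {R : RackS Q} (S : QSet R Y)

lemma parY_pull {n m : ℕ} (e : Fin m → ℤ) (idx : Fin m → Fin n) (y : Fin n → Q)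
    (f : ℤ) (a : Q) (υ : Y) :
    parY S e idx y (((S.T a) ^ f) υ)
      = ((S.T (par R e idx y a)) ^ f) (parY S e idx y υ) :=
  foldY_pull S e idx y (List.finRange m) f a υ

lemma main_compat {n m : ℕ} (e : Fin m → ℤ) (idx : Fin m → Fin n)
    (x y : Fin n → Q) :
    ∀ (l : List (Fin m)) (υ : Y),
    parY S e idx y (l.foldl (fun υ j => ((S.T (x (idx j))) ^ (e j)) υ) υ)
      = l.foldl (fun υ j => ((S.T (par R e idx y (x (idx j)))) ^ (e j)) υ)
          (parY S e idx y υ) := by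
  intro l
  induction l with
  | nil => intro υ; rfl
  | cons j l ih =>
    intro υ
    rw [List.foldl_cons, List.foldl_cons, ih, parY_pull]

lemma bij_fold {n m : ℕ} (e : Fin m → ℤ) (idx : Fin m → Fin n) (b : Fin n → Q) :
    ∀ l : List (Fin m),
    Function.Bijective (fun υ : Y =>
      l.foldl (fun υ j => ((S.T (b (idx j))) ^ (e j)) υ) υ) := by
  intro l
  induction l with
  | nil => exact Function.bijective_id
  | cons j l ih =>
    simp only [List.foldl_cons]
    exact ih.comp ((S.T (b (idx j)) ^ e j).bijective)

end

/-- With `Q^n` carrying the parallel rack operation, `Y` is a `Q^n`-set via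
`υ ⋆ (b₁,…,b_n) = υ ⋆^{e₁} b_{i₁} ⋯ ⋆^{e_m} b_{i_m}`. -/
theorem stmt_11 (Q Y : Type*) (R : RackS Q) (S : QSet R Y) (n m : ℕ)
    (e : Fin m → ℤ) (he : ∀ j, e j = 1 ∨ e j = -1) (idx : Fin m → Fin n) :
    ∀ rop : (Fin n → Q) → (Fin n → Q) → (Fin n → Q),
      (rop = fun a b => fun k => par R e idx b (a k)) →
    ∀ ract : Y → (Fin n → Q) → Y,
      (ract = fun υ b => parY S e idx b υ) →
      (∀ b : Fin n → Q, Function.Bijective (fun υ => ract υ b)) ∧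
      (∀ (υ : Y) (x y : Fin n → Q),
        ract (ract υ x) y = ract (ract υ y) (rop x y)) := by
  intro rop hrop ract hract
  subst hrop hract
  constructor
  · intro b
    exact bij_fold S e idx b (List.finRange m)
  · intro υ x y
    exact main_compat S e idx x y (List.finRange m) υ
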